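/- Let ℓ₁,…,ℓₙ and ℓ₁,…,ℓ_{n−1},ℓₙ' be two collections of differentiable functions ℝ^d → ℝ differing only in the last function, each with gradient norm at most L everywhere. Define f₁ = (1/n)·(Σ_{j=1}^{n−1} ℓⱼ + ℓₙ) and f₂ = (1/n)·(Σ_{j=1}^{n−1} ℓⱼ + ℓₙ'). Suppose f₁ satisfies the error bound with parameter μ > 0: for every x there is a global minimizer x_p of f₁ with ‖∇f₁(x)‖ ≥ μ·‖x − x_p‖. Let w₂* be a global minimizer of f₂ (so ∇f₂(w₂*) = 0) and let w₁* be a global minimizer of f₁ closest to w₂*. Then ‖w₁* − w₂*‖ ≤ 2L/(μn). -/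

import Mathlib

set_option maxHeartbeats 1000000

open Finset InnerProductSpace

theorem pl_minimizers_close (d n : ℕ) (hn : 1 ≤ n) (L μ : ℝ)
    (g : Fin (n - 1) → EuclideanSpace ℝ (Fin d) → ℝ)
    (ℓn ℓn' : EuclideanSpace ℝ (Fin d) → ℝ)
    (hdiffg : ∀ j, Differentiable ℝ (g j))
    (hdiffn : Differentiable ℝ ℓn)
    (hdiffn' : Differentiable ℝ ℓn')
    (hgradg : ∀ j w, ‖gradient (g j) w‖ ≤ L)
    (hgradn : ∀ w, ‖gradient ℓn w‖ ≤ L)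
    (hgradn' : ∀ w, ‖gradient ℓn' w‖ ≤ L)
    (hμ : 0 < μ)
    (f₁ f₂ : EuclideanSpace ℝ (Fin d) → ℝ)
    (hf₁ : f₁ = fun w => (1 / (n : ℝ)) * (∑ j, g j w + ℓn w))
    (hf₂ : f₂ = fun w => (1 / (n : ℝ)) * (∑ j, g j w + ℓn' w))
    (hEB : ∀ x, ∃ xp, (∀ y, f₁ xp ≤ f₁ y) ∧ μ * ‖x - xp‖ ≤ ‖gradient f₁ x‖)
    (w₂s : EuclideanSpace ℝ (Fin d))
    (hw₂s : ∀ y, f₂ w₂s ≤ f₂ y)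
    (w₁s : EuclideanSpace ℝ (Fin d))
    (hw₁s : ∀ y, f₁ w₁s ≤ f₁ y)
    (hclosest : ∀ v, (∀ y, f₁ v ≤ f₁ y) → ‖w₂s - w₁s‖ ≤ ‖w₂s - v‖) :
    ‖w₁s - w₂s‖ ≤ 2 * L / (μ * n) := by
  have hn0 : (0:ℝ) < n := by exact_mod_cast hn
  -- gradients of f₁ and f₂
  have hG : ∀ (ℓ : EuclideanSpace ℝ (Fin d) → ℝ), Differentiable ℝ ℓ → ∀ w,
      HasGradientAt (fun w => (1 / (n : ℝ)) * (∑ j, g j w + ℓ w))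
        ((1 / (n : ℝ)) • (∑ j, gradient (g j) w + gradient ℓ w)) w := by
    intro ℓ hℓ w
    rw [hasGradientAt_iff_hasFDerivAt, map_smul, map_add, map_sum]
    have hsum : HasFDerivAt (fun w => ∑ j, g j w + ℓ w)
        (∑ j, toDual ℝ (EuclideanSpace ℝ (Fin d)) (gradient (g j) w) + toDual ℝ (EuclideanSpace ℝ (Fin d)) (gradient ℓ w)) w :=
      (HasFDerivAt.fun_sum fun j _ => ((hdiffg j w).hasGradientAt).hasFDerivAt).add
        (hℓ w).hasGradientAt.hasFDerivAt
    exact hsum.const_smul ((1 : ℝ) / n) |>.congr_fderiv rfl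
  have hg1 : gradient f₁ w₂s
      = (1 / (n : ℝ)) • (∑ j, gradient (g j) w₂s + gradient ℓn w₂s) := by
    rw [hf₁]; exact (hG ℓn hdiffn w₂s).gradient
  have hg2 : gradient f₂ w₂s
      = (1 / (n : ℝ)) • (∑ j, gradient (g j) w₂s + gradient ℓn' w₂s) := by
    rw [hf₂]; exact (hG ℓn' hdiffn' w₂s).gradient
  have hmin : IsLocalMin f₂ w₂s := Filter.Eventually.of_forall hw₂s
  have h20 : gradient f₂ w₂s = 0 := by
    rw [gradient, hmin.fderiv_eq_zero, map_zero]
  have hdiff : gradient f₁ w₂s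
      = (1 / (n : ℝ)) • (gradient ℓn w₂s - gradient ℓn' w₂s) := by
    have := h20
    rw [hg2] at this
    rw [hg1, ← sub_zero ((1 / (n : ℝ)) • _), ← this, ← smul_sub]
    congr 1
    abel
  have hnorm : ‖gradient f₁ w₂s‖ ≤ 2 * L / n := by
    rw [hdiff, norm_smul]
    have h1 : ‖gradient ℓn w₂s - gradient ℓn' w₂s‖ ≤ 2 * L := by
      calc ‖gradient ℓn w₂s - gradient ℓn' w₂s‖
          ≤ ‖gradient ℓn w₂s‖ + ‖gradient ℓn' w₂s‖ := norm_sub_le _ _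
        _ ≤ L + L := add_le_add (hgradn w₂s) (hgradn' w₂s)
        _ = 2 * L := by ring
    have h2 : ‖(1 / (n : ℝ))‖ = 1 / n := by
      rw [Real.norm_eq_abs, abs_of_pos (by positivity)]
    rw [h2]
    rw [div_mul_eq_mul_div, one_mul, div_le_div_iff₀ hn0 hn0, mul_comm]
    nlinarith [norm_sub_le (gradient ℓn w₂s) (gradient ℓn' w₂s)]
  obtain ⟨xp, hxpmin, hxpEB⟩ := hEB w₂s
  have h3 : ‖w₂s - w₁s‖ ≤ ‖w₂s - xp‖ := hclosest xp hxpmin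
  have h4 : μ * ‖w₂s - xp‖ ≤ 2 * L / n := le_trans hxpEB hnorm
  rw [norm_sub_rev]
  have h5 : μ * ‖w₂s - w₁s‖ ≤ 2 * L / n :=
    le_trans (by nlinarith) h4
  have h6 : μ * ‖w₂s - w₁s‖ * n ≤ 2 * L := (le_div_iff₀ hn0).mp h5
  rw [le_div_iff₀ (by positivity)]
  nlinarith
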